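/- Let G' be a graph of order n with minimum degree at least k (k ≥ 2, n ≥ 11k) equal to its own (n+1)-closure, which is not Hamilton-connected and satisfies e(G') > C(n−k,2) + k(k+1). Then the clique number of G' equals n − k + 1. -/

import Mathlib

open Classical SimpleGraph

noncomputable section

/-- Degree of a vertex (via `Set.ncard`, avoiding decidability assumptions). -/
noncomputable def gdeg {V : Type*} (G : SimpleGraph V) (v : V) : ℕ :=
  (G.neighborSet v).ncard

/-- A graph is Hamilton-connected if every two distinct vertices are joined by a
Hamiltonian path. -/
def HamConnected {V : Type*} (G : SimpleGraph V) : Prop :=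
  ∀ u v : V, u ≠ v → ∃ p : G.Walk u v, p.IsHamiltonian

/-- One closure step: simultaneously join all nonadjacent pairs with degree sum ≥ k. -/
noncomputable def closureStep {V : Type*} (k : ℕ) (G : SimpleGraph V) : SimpleGraph V :=
  G ⊔ SimpleGraph.fromRel (fun u v => ¬ G.Adj u v ∧ k ≤ gdeg G u + gdeg G v)

/-- The `k`-closure of a graph: repeatedly join nonadjacent pairs of vertices with
degree sum at least `k` until no such pair remains. -/
noncomputable def kClosure {V : Type*} [Fintype V] (k : ℕ) (G : SimpleGraph V) : SimpleGraph V :=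
  (closureStep k)^[Fintype.card V * Fintype.card V] G

/-! ### Auxiliary lemmas -/

lemma gdeg_eq {V : Type*} [Fintype V] (G : SimpleGraph V) (v : V) : gdeg G v = G.degree v := by
  rw [gdeg, ← card_neighborFinset_eq_degree, neighborFinset, Set.ncard_eq_toFinset_card']

lemma le_closureStep {V : Type*} (k : ℕ) (G : SimpleGraph V) : G ≤ closureStep k G := le_sup_left

lemma le_iterate_closureStep {V : Type*} (k : ℕ) (m : ℕ) (G : SimpleGraph V) :
    G ≤ (closureStep k)^[m] G := by
  induction m generalizing G with
  | zero => simp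
  | succ m ih =>
    rw [Function.iterate_succ_apply]
    exact le_trans (le_closureStep k G) (ih _)

/-- A fixed point of `kClosure` (with positive card) is a fixed point of one step. -/
lemma closureStep_fixed {V : Type*} [Fintype V] [Nonempty V] (k : ℕ) (G : SimpleGraph V)
    (h : kClosure k G = G) : closureStep k G = G := by
  have hc : 0 < Fintype.card V * Fintype.card V := by
    have := Fintype.card_pos (α := V); positivity
  obtain ⟨m, hm⟩ := Nat.exists_eq_succ_of_ne_zero hc.ne'
  apply le_antisymm _ (le_closureStep k G)
  calc closureStep k G ≤ (closureStep k)^[m] (closureStep k G) := le_iterate_closureStep k m _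
    _ = (closureStep k)^[m+1] G := (Function.iterate_succ_apply (closureStep k) m G).symm
    _ = G := by rw [show m + 1 = Fintype.card V * Fintype.card V from by omega]; exact h

lemma adj_of_closed {V : Type*} [Fintype V] [Nonempty V] (k : ℕ) (G : SimpleGraph V)
    (h : kClosure k G = G) {u v : V} (hne : u ≠ v) (hd : k ≤ gdeg G u + gdeg G v) :
    G.Adj u v := by
  by_contra hadj
  have hstep := closureStep_fixed k G h
  have : (closureStep k G).Adj u v := by
    right
    exact ⟨hne, Or.inl ⟨hadj, hd⟩⟩
  rw [hstep] at this
  exact hadj this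

section Complete
variable {V : Type*} [Fintype V] {G : SimpleGraph V}

lemma complete_path (hc : ∀ x y : V, x ≠ y → G.Adj x y) :
    ∀ (m : ℕ) (s : Finset V) (u v : V), s.card = m + 2 → u ≠ v → u ∈ s → v ∈ s →
      ∃ p : G.Walk u v, p.support.toFinset = s ∧ p.support.Nodup := by
  intro m
  induction m with
  | zero =>
    intro s u v hcard huv hu hv
    have hsub : ({u, v} : Finset V) ⊆ s := by
      intro x hx; simp at hx; rcases hx with h | h <;> subst h <;> assumption
    have hcard2 : ({u, v} : Finset V).card = 2 := by
      rw [Finset.card_insert_of_notMem (by simpa using huv), Finset.card_singleton]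
    have hs : s = {u, v} := (Finset.eq_of_subset_of_card_le hsub (by omega)).symm
    refine ⟨Walk.cons (hc u v huv) Walk.nil, ?_, ?_⟩
    · simp [hs, Walk.support_cons]
    · simp [Walk.support_cons, huv]
  | succ m ih =>
    intro s u v hcard huv hu hv
    have hv' : v ∈ s.erase u := Finset.mem_erase.2 ⟨Ne.symm huv, hv⟩
    have hcard' : (s.erase u).card = m + 2 := by
      rw [Finset.card_erase_of_mem hu]; omega
    have hne : ((s.erase u).erase v).Nonempty := by
      rw [← Finset.card_pos, Finset.card_erase_of_mem hv', hcard']; omega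
    obtain ⟨w, hw⟩ := hne
    have hwv : w ≠ v := (Finset.mem_erase.1 hw).1
    have hwmem : w ∈ s.erase u := (Finset.mem_erase.1 hw).2
    have hwu : w ≠ u := (Finset.mem_erase.1 hwmem).1
    obtain ⟨p, hp1, hp2⟩ := ih (s.erase u) w v hcard' hwv hwmem hv'
    refine ⟨Walk.cons (hc u w (Ne.symm hwu)) p, ?_, ?_⟩
    · rw [Walk.support_cons, List.toFinset_cons, hp1, Finset.insert_erase hu]
    · rw [Walk.support_cons, List.nodup_cons]
      constructor
      · intro hmem
        have : u ∈ s.erase u := by rw [← hp1]; exact List.mem_toFinset.2 hmem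
        simp at this
      · exact hp2

lemma hamConnected_of_complete (hcard : 2 ≤ Fintype.card V) (hc : ∀ x y : V, x ≠ y → G.Adj x y) :
    HamConnected G := by
  intro u v huv
  obtain ⟨p, hp1, hp2⟩ := complete_path hc (Fintype.card V - 2) Finset.univ u v
    (by simp; omega) huv (Finset.mem_univ u) (Finset.mem_univ v)
  refine ⟨p, fun x => ?_⟩
  have hmem : x ∈ p.support := by
    rw [← List.mem_toFinset, hp1]; exact Finset.mem_univ x
  exact List.count_eq_one_of_mem hp2 hmem

end Complete

set_option maxHeartbeats 1000000 in
theorem cliqueNum_of_closed_graph (n k : ℕ) (hk : 2 ≤ k) (hn : 11 * k ≤ n)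
    (G' : SimpleGraph (Fin n)) (hδ : ∀ v, k ≤ gdeg G' v)
    (hclosed : kClosure (n + 1) G' = G')
    (hnotHC : ¬ HamConnected G')
    (he : (n - k).choose 2 + k * (k + 1) < G'.edgeSet.ncard) :
    G'.cliqueNum = n - k + 1 := by
  classical
  have hn22 : 22 ≤ n := by omega
  haveI : Nonempty (Fin n) := ⟨⟨0, by omega⟩⟩
  have hadj : ∀ {u v : Fin n}, u ≠ v → n + 1 ≤ G'.degree u + G'.degree v → G'.Adj u v := by
    intro u v h1 h2
    exact adj_of_closed (n+1) G' hclosed h1 (by rw [gdeg_eq, gdeg_eq]; exact h2)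
  have hδ' : ∀ v, k ≤ G'.degree v := fun v => by rw [← gdeg_eq]; exact hδ v
  have hdlt : ∀ v, G'.degree v < n := fun v => by
    simpa using G'.degree_lt_card_verts v
  set E := G'.edgeSet.ncard with hEdef
  have hE : ∑ v, G'.degree v = 2 * E := by
    rw [sum_degrees_eq_twice_card_edges]
    congr 1
    rw [hEdef, Set.ncard_eq_toFinset_card']
    rw [← Set.ncard_coe_finset, coe_edgeFinset, Set.ncard_eq_toFinset_card']
  -- upper bound
  have hub : G'.cliqueNum ≤ n - k + 1 := by
    by_contra hub
    push_neg at hub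
    obtain ⟨s, hs⟩ := G'.exists_isNClique_cliqueNum
    have hscard : n - k + 2 ≤ s.card := by rw [hs.card_eq]; omega
    have hsclique := hs.isClique
    have hds : ∀ c ∈ s, n - k + 1 ≤ G'.degree c := by
      intro c hcmem
      have hsub : s.erase c ⊆ G'.neighborFinset c := by
        intro x hx
        obtain ⟨hxc, hxs⟩ := Finset.mem_erase.1 hx
        rw [mem_neighborFinset]
        exact hsclique (by simpa using hcmem) (by simpa using hxs) (Ne.symm hxc)
      have hcc := Finset.card_le_card hsub
      rw [Finset.card_erase_of_mem hcmem, card_neighborFinset_eq_degree] at hcc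
      omega
    have hall : ∀ x : Fin n, ∀ c ∈ s, c ≠ x → G'.Adj x c := by
      intro x c hcmem hne
      by_cases hxy : G'.Adj x c
      · exact hxy
      · exact hadj (Ne.symm hne) (by have h1 := hδ' x; have h2 := hds c hcmem; omega)
    have hdall : ∀ x : Fin n, n - k + 1 ≤ G'.degree x := by
      intro x
      have hsub : s.erase x ⊆ G'.neighborFinset x := by
        intro c hcmem
        obtain ⟨hcx, hcs⟩ := Finset.mem_erase.1 hcmem
        rw [mem_neighborFinset]
        exact hall x c hcs hcx
      have hcc := Finset.card_le_card hsub
      rw [card_neighborFinset_eq_degree] at hcc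
      have hec : s.card - 1 ≤ (s.erase x).card := Finset.pred_card_le_card_erase
      omega
    have hcomp : ∀ x y : Fin n, x ≠ y → G'.Adj x y := by
      intro x y hxy
      by_cases hxy2 : G'.Adj x y
      · exact hxy2
      · refine hadj hxy ?_
        have h1 := hdall x
        have h2 := hdall y
        omega
    exact hnotHC (hamConnected_of_complete (by rw [Fintype.card_fin]; omega) hcomp)
  -- lower bound
  have hlb : n - k + 1 ≤ G'.cliqueNum := by
    by_contra hlb
    push_neg at hlb
    have hω : G'.cliqueNum ≤ n - k := by omega
    set L : Finset (Fin n) := Finset.univ.filter (fun v => 2 * G'.degree v ≤ n) with hL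
    set H : Finset (Fin n) := Finset.univ.filter (fun v => ¬ (2 * G'.degree v ≤ n)) with hH
    have hHclique : G'.IsClique (H : Set (Fin n)) := by
      intro x hx y hy hxy
      have hx' : n < 2 * G'.degree x := by
        have := hx; simp [hH] at this; exact this
      have hy' : n < 2 * G'.degree y := by
        have := hy; simp [hH] at this; exact this
      exact hadj hxy (by omega)
    have hHcard : H.card ≤ n - k :=
      le_trans (IsClique.card_le_cliqueNum (tc := hHclique)) hω
    have hcardsplit : L.card + H.card = n := by
      rw [hL, hH]
      rw [Finset.card_filter_add_card_filter_not]
      simp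
    set t := L.card with htdef
    set m := H.card with hmdef
    have htk : k ≤ t := by omega
    have hkn : k ≤ n := by omega
    have hsum : ∑ v ∈ L, G'.degree v + ∑ v ∈ H, G'.degree v = 2 * E := by
      rw [← hE, hL, hH]
      exact Finset.sum_filter_add_sum_filter_not _ _ _
    have hchoose : 2 * ((n - k).choose 2) = (n - k) * (n - k - 1) := by
      rw [Nat.choose_two_right]
      have h2 : 2 ∣ (n - k) * (n - k - 1) := by
        rcases Nat.even_or_odd (n - k) with h | h
        · exact Dvd.dvd.mul_right h.two_dvd _
        · refine Dvd.dvd.mul_left ?_ _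
          have he' : Even (n - k - 1) := by
            rcases h with ⟨j, hj⟩; exact ⟨j, by omega⟩
          exact he'.two_dvd
      omega
    obtain ⟨b, hb⟩ : ∃ b, n - k = b + 1 := ⟨n - k - 1, by omega⟩
    have he3 : (b + 1) * b + 2 * (k * (k + 1)) + 2 ≤ 2 * E := by
      have h2 : 2 * ((n - k).choose 2) + 2 * (k * (k + 1)) + 2 ≤ 2 * E := by omega
      calc (b + 1) * b + 2 * (k * (k + 1)) + 2
          = 2 * ((n - k).choose 2) + 2 * (k * (k + 1)) + 2 := by
            rw [hchoose, hb, Nat.add_sub_cancel]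
        _ ≤ 2 * E := h2
    have hb2 : n = b + 1 + k := by omega
    -- integer versions of basic facts
    have hbZ : ((b : ℤ) + 1) + k = n := by exact_mod_cast hb2.symm
    have hkZ : (2 : ℤ) ≤ (k : ℤ) := by exact_mod_cast hk
    have hnZ : 11 * (k : ℤ) ≤ (n : ℤ) := by exact_mod_cast hn
    have htkZ : (k : ℤ) ≤ (t : ℤ) := by exact_mod_cast htk
    have he3Z : ((b : ℤ) + 1) * b + 2 * (k * (k + 1)) + 2 ≤ 2 * (E : ℤ) := by exact_mod_cast he3
    by_cases hcase : 2 * t < n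
    · -- light vertices have degree ≤ t + 1
      have hlight : ∀ w ∈ L, G'.degree w ≤ t + 1 := by
        intro w hw
        have hwlight : 2 * G'.degree w ≤ n := by
          have := hw; simp [hL] at this; exact this
        have ht1 : 1 ≤ t := Finset.card_pos.2 ⟨w, hw⟩
        set A : Finset (Fin n) := Finset.univ \ insert w (G'.neighborFinset w) with hA
        have hAcard : A.card = n - (G'.degree w + 1) := by
          rw [hA, Finset.card_sdiff_of_subset (Finset.subset_univ _),
            Finset.card_insert_of_notMem (G'.notMem_neighborFinset_self w),
            card_neighborFinset_eq_degree]
          simp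
        have hex : ∃ h ∈ A, ¬ (2 * G'.degree h ≤ n) := by
          by_contra hcon
          push_neg at hcon
          have hsubL : A ⊆ L.erase w := by
            intro x hx
            refine Finset.mem_erase.2 ⟨?_, ?_⟩
            · rintro rfl
              have := (Finset.mem_sdiff.1 hx).2
              simp at this
            · simp only [hL, Finset.mem_filter, Finset.mem_univ, true_and]
              exact hcon x hx
          have hcc := Finset.card_le_card hsubL
          rw [hAcard, Finset.card_erase_of_mem hw] at hcc
          have hdn := hdlt w
          omega
        obtain ⟨h, hhA, hheavy⟩ := hex
        have hhsplit := Finset.mem_sdiff.1 hhA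
        have hhw : h ≠ w := by
          rintro rfl
          exact hhsplit.2 (Finset.mem_insert_self _ _)
        have hhadj : ¬ G'.Adj w h := by
          intro hadj2
          exact hhsplit.2 (Finset.mem_insert_of_mem ((mem_neighborFinset _ _ _).2 hadj2))
        have hBcard : n - (G'.degree h + 1) ≤ t := by
          set B : Finset (Fin n) := Finset.univ \ insert h (G'.neighborFinset h) with hB
          have hBsub : B ⊆ L := by
            intro x hx
            have hxsplit := Finset.mem_sdiff.1 hx
            have hxh : x ≠ h := by
              rintro rfl; exact hxsplit.2 (Finset.mem_insert_self _ _)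
            have hxadj : ¬ G'.Adj h x := by
              intro hadj2
              exact hxsplit.2 (Finset.mem_insert_of_mem ((mem_neighborFinset _ _ _).2 hadj2))
            simp only [hL, Finset.mem_filter, Finset.mem_univ, true_and]
            by_contra hxheavy
            exact hxadj (hadj (Ne.symm hxh) (by omega))
          have hcc := Finset.card_le_card hBsub
          have hBcard' : B.card = n - (G'.degree h + 1) := by
            rw [hB, Finset.card_sdiff_of_subset (Finset.subset_univ _),
              Finset.card_insert_of_notMem (G'.notMem_neighborFinset_self h),
              card_neighborFinset_eq_degree]
            simp
          omega
        have hsum2 : G'.degree w + G'.degree h ≤ n := by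
          by_contra hcon
          push_neg at hcon
          exact hhadj (hadj (Ne.symm hhw) (by omega))
        have hdh := hdlt h
        omega
      have hLsum : ∑ v ∈ L, G'.degree v ≤ t * (t + 1) := by
        calc ∑ v ∈ L, G'.degree v ≤ ∑ _v ∈ L, (t + 1) := Finset.sum_le_sum hlight
          _ = t * (t + 1) := by rw [Finset.sum_const, smul_eq_mul]
      -- heavy side
      have hHsum : ∑ v ∈ H, G'.degree v + m ≤ m * m + ∑ v ∈ L, G'.degree v := by
        have key : ∀ h ∈ H, G'.degree h + 1 ≤ m + (L.filter (fun w => G'.Adj h w)).card := by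
          intro h hh
          have hcover : G'.neighborFinset h ⊆
              (H.erase h) ∪ (L.filter (fun w => G'.Adj h w)) := by
            intro x hx
            have hxadj : G'.Adj h x := (mem_neighborFinset _ _ _).1 hx
            by_cases hxL : 2 * G'.degree x ≤ n
            · exact Finset.mem_union_right _ (Finset.mem_filter.2
                ⟨by simp only [hL, Finset.mem_filter, Finset.mem_univ, true_and]; exact hxL,
                 hxadj⟩)
            · refine Finset.mem_union_left _ (Finset.mem_erase.2 ⟨?_, ?_⟩)
              · exact fun hxe => G'.loopless.irrefl h (hxe ▸ hxadj)
              · simp only [hH, Finset.mem_filter, Finset.mem_univ, true_and]; exact hxL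
          have hcc := Finset.card_le_card hcover
          have hcu := Finset.card_union_le (H.erase h) (L.filter (fun w => G'.Adj h w))
          rw [card_neighborFinset_eq_degree] at hcc
          have hce := Finset.card_erase_of_mem hh
          have hm1 : 1 ≤ m := Finset.card_pos.2 ⟨h, hh⟩
          omega
        have hsk : ∑ v ∈ H, (G'.degree v + 1) ≤
            ∑ h ∈ H, (m + (L.filter (fun w => G'.Adj h w)).card) :=
          Finset.sum_le_sum key
        have hdc : ∑ h ∈ H, (L.filter (fun w => G'.Adj h w)).card ≤
            ∑ w ∈ L, G'.degree w := by
          have h1 : ∑ h ∈ H, (L.filter (fun w => G'.Adj h w)).card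
              = ∑ w ∈ L, (H.filter (fun h => G'.Adj h w)).card := by
            simp only [Finset.card_filter]
            rw [Finset.sum_comm]
          rw [h1]
          refine Finset.sum_le_sum ?_
          intro w _
          have hsub : H.filter (fun h => G'.Adj h w) ⊆ G'.neighborFinset w := by
            intro x hx
            exact (mem_neighborFinset _ _ _).2 ((Finset.mem_filter.1 hx).2.symm)
          calc (H.filter (fun h => G'.Adj h w)).card ≤ (G'.neighborFinset w).card :=
                Finset.card_le_card hsub
            _ = G'.degree w := G'.card_neighborFinset_eq_degree w
        rw [Finset.sum_add_distrib, Finset.sum_const, smul_eq_mul, mul_one] at hsk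
        rw [Finset.sum_add_distrib, Finset.sum_const, smul_eq_mul] at hsk
        simp only [← hmdef] at hsk
        omega
      have hmain : 2 * E + m ≤ m * m + 2 * (t * (t + 1)) := by omega
      have hmt : m + t = n := by omega
      have hcase' : 2 * t + 1 ≤ n := hcase
      -- integer contradiction
      have hmainZ : 2 * (E : ℤ) + m ≤ (m : ℤ) * m + 2 * ((t : ℤ) * (t + 1)) := by
        exact_mod_cast hmain
      have hmtZ : (m : ℤ) + t = n := by exact_mod_cast hmt
      have hcaseZ : 2 * (t : ℤ) + 1 ≤ n := by exact_mod_cast hcase'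
      nlinarith [mul_nonneg (by linarith : (0:ℤ) ≤ (t : ℤ) - k)
        (by linarith : (0:ℤ) ≤ 2 * (n : ℤ) - 3 * t - 3 * k - 3)]
    · -- many light vertices
      push_neg at hcase
      have hHsum : ∑ v ∈ H, G'.degree v ≤ m * (n - 1) := by
        calc ∑ v ∈ H, G'.degree v ≤ ∑ _v ∈ H, (n - 1) := by
              refine Finset.sum_le_sum ?_
              intro v _
              have := hdlt v
              omega
          _ = m * (n - 1) := by rw [Finset.sum_const, smul_eq_mul, ← hmdef]
      have hLsum : 2 * ∑ v ∈ L, G'.degree v ≤ t * n := by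
        rw [Finset.mul_sum]
        calc ∑ v ∈ L, 2 * G'.degree v ≤ ∑ _v ∈ L, n := by
              refine Finset.sum_le_sum ?_
              intro w hw
              have := hw; simp [hL] at this; exact this
          _ = t * n := by rw [Finset.sum_const, smul_eq_mul]
      have hmain : 4 * E ≤ t * n + 2 * (m * (n - 1)) := by omega
      have hmt : m + t = n := by omega
      have hmainZ : 4 * (E : ℤ) ≤ (t : ℤ) * n + 2 * ((m : ℤ) * (n - 1)) := by
        have h1 : ((n : ℤ) - 1) = ((n - 1 : ℕ) : ℤ) := by
          have : 1 ≤ n := by omega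
          omega
        rw [h1]
        exact_mod_cast hmain
      have hmtZ : (m : ℤ) + t = n := by exact_mod_cast hmt
      have hcaseZ : (n : ℤ) ≤ 2 * t := by exact_mod_cast hcase
      nlinarith [mul_nonneg (by linarith : (0:ℤ) ≤ 2 * (t : ℤ) - n)
          (by linarith : (0:ℤ) ≤ (n : ℤ) - 2),
        mul_nonneg (by linarith : (0:ℤ) ≤ (n : ℤ) - 11 * k) (by linarith : (0:ℤ) ≤ (n : ℤ)),
        mul_nonneg (by linarith : (0:ℤ) ≤ (n : ℤ) - 11 * k) (by linarith : (0:ℤ) ≤ (k : ℤ))]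
  omega

end
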